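/- Let R be a reduced root system with a choice of positive roots, and A a set of pairwise strongly orthogonal roots satisfying property #: for distinct α₁,α₂ ∈ A and β > 0, s_{α₁}(β) < 0 implies s_{α₂}(β) > 0. Then for any disjoint subsets A₁, A₂ ⊂ A and any β > 0 with S_{A₁}(β) < 0, we have S_{A₂}(β) > 0 and S_{A₁}S_{A₂}(β) < 0, where S_B denotes the product of the reflections s_α for α ∈ B. -/
import Mathlib

open scoped InnerProductSpace

variable {V : Type*} [NormedAddCommGroup V] [InnerProductSpace ℝ V]

/-- The (orthogonal) reflection in the root `α`: `s_α(v) = v - (2⟪v,α⟫/⟪α,α⟫)α`. -/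
noncomputable def sRefl (α v : V) : V := v - (2 * ⟪v, α⟫_ℝ / ⟪α, α⟫_ℝ) • α

/-- The coroot of `α`, identified with a vector via the invariant inner product. -/
noncomputable def coroot (α : V) : V := (2 / ⟪α, α⟫_ℝ) • α

/-- `S_A`: the product of the (commuting) reflections in the pairwise orthogonal
elements of `A`, given by its closed formula. -/
noncomputable def SRefl (A : Finset V) (v : V) : V :=
  v - ∑ α ∈ A, (2 * ⟪v, α⟫_ℝ / ⟪α, α⟫_ℝ) • α

/-- A (reduced) root system in `V`, with the ambient inner product Weyl-invariant. -/
structure IsRootSystem (R : Set V) : Prop where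
  finite : R.Finite
  nonempty : R.Nonempty
  ne_zero : ∀ α ∈ R, α ≠ (0 : V)
  refl_mem : ∀ α ∈ R, ∀ β ∈ R, sRefl α β ∈ R
  integral : ∀ α ∈ R, ∀ β ∈ R, ∃ n : ℤ, 2 * ⟪β, α⟫_ℝ / ⟪α, α⟫_ℝ = (n : ℝ)
  reduced : ∀ α ∈ R, ∀ t : ℝ, t • α ∈ R → t = 1 ∨ t = -1

/-- `α` and `β` are strongly orthogonal: neither their sum nor difference is a root. -/
def StronglyOrthogonal (R : Set V) (α β : V) : Prop := α + β ∉ R ∧ α - β ∉ R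

/-- A strongly orthogonal subset of `R`. -/
def IsSOS (R A : Set V) : Prop := A ⊆ R ∧ A.Pairwise (StronglyOrthogonal R)

/-- A choice of positive roots in `R`. -/
structure IsPositiveSystem (R P : Set V) : Prop where
  subset : P ⊆ R
  mem_or_neg_mem : ∀ α ∈ R, α ∈ P ∨ -α ∈ P
  not_both : ∀ α ∈ P, -α ∉ P
  add_mem : ∀ α ∈ P, ∀ β ∈ P, α + β ∈ R → α + β ∈ P

/-- Property `#(R,>,A)`: for distinct `α₁, α₂ ∈ A` and `β > 0`,
`s_{α₁}(β) < 0` implies `s_{α₂}(β) > 0`. -/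
def PropSharp (P A : Set V) : Prop :=
  ∀ α₁ ∈ A, ∀ α₂ ∈ A, α₁ ≠ α₂ → ∀ β ∈ P, -(sRefl α₁ β) ∈ P → sRefl α₂ β ∈ P

/-- Property `##(R,>,A)`: for disjoint `A₁, A₂ ⊆ A` and `β > 0` with `S_{A₁}(β) < 0`
one has `S_{A₂}(β) > 0` and `S_{A₁}S_{A₂}(β) < 0`. -/
def PropSharpSharp (P : Set V) (A : Finset V) : Prop :=
  ∀ A₁ ⊆ A, ∀ A₂ ⊆ A, Disjoint A₁ A₂ → ∀ β ∈ P, -(SRefl A₁ β) ∈ P →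
    SRefl A₂ β ∈ P ∧ -(SRefl A₁ (SRefl A₂ β)) ∈ P

/-- `R⁺_B = {β : β > 0 ∧ S_B(β) < 0}`. -/
noncomputable def RPlus (P : Set V) (B : Finset V) : Set V :=
  {β | β ∈ P ∧ -(SRefl B β) ∈ P}

/-! ### Auxiliary computational lemmas -/

lemma sRefl_neg (α v : V) : sRefl α (-v) = -(sRefl α v) := by
  simp only [sRefl, inner_neg_left]
  module

lemma inner_sRefl (α v w : V) : ⟪sRefl α v, w⟫_ℝ
    = ⟪v, w⟫_ℝ - (2 * ⟪v, α⟫_ℝ / ⟪α, α⟫_ℝ) * ⟪α, w⟫_ℝ := by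
  simp [sRefl, inner_sub_left, real_inner_smul_left]

lemma sRefl_sRefl {α : V} (h : ⟪α, α⟫_ℝ ≠ 0) (v : V) : sRefl α (sRefl α v) = v := by
  rw [sRefl, inner_sRefl]
  have : 2 * (⟪v, α⟫_ℝ - 2 * ⟪v, α⟫_ℝ / ⟪α, α⟫_ℝ * ⟪α, α⟫_ℝ) / ⟪α, α⟫_ℝ
      = -(2 * ⟪v, α⟫_ℝ / ⟪α, α⟫_ℝ) := by field_simp; ring
  rw [this, sRefl]
  module

lemma sRefl_comm {α α' : V} (h : ⟪α, α'⟫_ℝ = 0) (v : V) :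
    sRefl α (sRefl α' v) = sRefl α' (sRefl α v) := by
  have h' : ⟪α', α⟫_ℝ = 0 := by rw [real_inner_comm]; exact h
  conv_lhs => rw [sRefl, inner_sRefl, h', mul_zero, sub_zero]
  conv_rhs => rw [sRefl, inner_sRefl, h, mul_zero, sub_zero]
  rw [sRefl, sRefl]
  module

lemma sRefl_neg_root (α v : V) : sRefl (-α) v = sRefl α v := by
  simp only [sRefl, inner_neg_right, inner_neg_left, neg_neg]
  module

lemma sRefl_self {α : V} (h : ⟪α, α⟫_ℝ ≠ 0) : sRefl α α = -α := by
  rw [sRefl, mul_div_assoc, div_self h]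
  module

lemma SRefl_empty (v : V) : SRefl ∅ v = v := by simp [SRefl]

lemma SRefl_insert [DecidableEq V] {α : V} {B : Finset V} (hα : α ∉ B)
    (horth : ∀ α' ∈ B, ⟪α, α'⟫_ℝ = 0) (v : V) :
    SRefl (insert α B) v = SRefl B (sRefl α v) := by
  rw [SRefl, Finset.sum_insert hα, SRefl]
  have : ∀ α' ∈ B, (2 * ⟪sRefl α v, α'⟫_ℝ / ⟪α', α'⟫_ℝ) • α'
      = (2 * ⟪v, α'⟫_ℝ / ⟪α', α'⟫_ℝ) • α' := by
    intro α' hα'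
    rw [inner_sRefl, horth α' hα', mul_zero, sub_zero]
  rw [Finset.sum_congr rfl this, sRefl]
  abel

lemma SRefl_insert' [DecidableEq V] {α : V} {B : Finset V} (hα : α ∉ B)
    (horth : ∀ α' ∈ B, ⟪α, α'⟫_ℝ = 0) (v : V) :
    SRefl (insert α B) v = sRefl α (SRefl B v) := by
  rw [SRefl, Finset.sum_insert hα, sRefl, SRefl, inner_sub_left, sum_inner]
  have : ∀ α' ∈ B, ⟪(2 * ⟪v, α'⟫_ℝ / ⟪α', α'⟫_ℝ) • α', α⟫_ℝ = 0 := by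
    intro α' hα'
    have h0 : ⟪α', α⟫_ℝ = 0 := by rw [real_inner_comm]; exact horth α' hα'
    rw [real_inner_smul_left, h0, mul_zero]
  rw [Finset.sum_congr rfl this, Finset.sum_const_zero, sub_zero]
  abel

/-! ### Root system lemmas -/

section RS

variable {R P : Set V} {A : Finset V}

lemma root_inner_self_ne (hR : IsRootSystem R) {α : V} (hα : α ∈ R) :
    ⟪α, α⟫_ℝ ≠ 0 :=
  inner_self_ne_zero.mpr (hR.ne_zero α hα)

lemma neg_mem_root (hR : IsRootSystem R) {α : V} (hα : α ∈ R) : -α ∈ R := by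
  have := hR.refl_mem α hα α hα
  rwa [sRefl_self (root_inner_self_ne hR hα)] at this

/-- Under `#`, `A` cannot contain both `α` and `-α`. -/
lemma no_neg_pair (hR : IsRootSystem R) (hP : IsPositiveSystem R P)
    (hA : IsSOS R ↑A) (hsharp : PropSharp P ↑A) {α : V}
    (hα : α ∈ A) (hα' : -α ∈ A) : False := by
  have hαR : α ∈ R := hA.1 (by exact_mod_cast hα)
  have ha : ⟪α, α⟫_ℝ ≠ 0 := root_inner_self_ne hR hαR
  have hne : α ≠ -α := by
    intro h
    have h2 : α + α = 0 := by nth_rewrite 2 [h]; simp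
    have h3 : (2:ℝ) • α = 0 := by rw [two_smul]; exact h2
    rcases smul_eq_zero.mp h3 with h4 | h4
    · norm_num at h4
    · exact hR.ne_zero α hαR h4
  rcases hP.mem_or_neg_mem α hαR with hp | hp
  · have h1 : -(sRefl α α) ∈ P := by rw [sRefl_self ha, neg_neg]; exact hp
    have h2 := hsharp α (by exact_mod_cast hα) (-α) (by exact_mod_cast hα') hne α hp h1
    rw [sRefl_neg_root, sRefl_self ha] at h2
    exact hP.not_both α hp h2
  · have h1 : -(sRefl (-α) (-α)) ∈ P := by
      rw [sRefl_neg_root, sRefl_neg, sRefl_self ha, neg_neg]; exact hp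
    have h2 := hsharp (-α) (by exact_mod_cast hα') α (by exact_mod_cast hα) hne.symm (-α) hp h1
    rw [sRefl_neg, sRefl_self ha, neg_neg] at h2
    exact hP.not_both (-α) hp (by rwa [neg_neg])

/-- Distinct elements of a strongly orthogonal set (satisfying `#`) are orthogonal. -/
lemma sos_orth (hR : IsRootSystem R) (hP : IsPositiveSystem R P)
    (hA : IsSOS R ↑A) (hsharp : PropSharp P ↑A) {α α' : V}
    (hα : α ∈ A) (hα' : α' ∈ A) (hne : α ≠ α') : ⟪α, α'⟫_ℝ = 0 := by
  by_contra hip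
  have hαR : α ∈ R := hA.1 (by exact_mod_cast hα)
  have hα'R : α' ∈ R := hA.1 (by exact_mod_cast hα')
  have hso : StronglyOrthogonal R α α' :=
    hA.2 (by exact_mod_cast hα) (by exact_mod_cast hα') hne
  have ha : ⟪α, α⟫_ℝ ≠ 0 := root_inner_self_ne hR hαR
  have ha' : ⟪α', α'⟫_ℝ ≠ 0 := root_inner_self_ne hR hα'R
  by_cases hpar : ∃ r : ℝ, α' = r • α
  · obtain ⟨r, hr⟩ := hpar
    rcases hR.reduced α hαR r (hr ▸ hα'R) with h1 | h1
    · exact hne (show α = α' by rw [hr, h1, one_smul])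
    · rw [h1, neg_one_smul] at hr
      exact no_neg_pair hR hP hA hsharp hα (hr ▸ hα')
  · obtain ⟨n, hn⟩ := hR.integral α hαR α' hα'R
    obtain ⟨m, hm⟩ := hR.integral α' hα'R α hαR
    -- the Cartan product
    have hip' : ⟪α', α⟫_ℝ = ⟪α, α'⟫_ℝ := real_inner_comm α α'
    have hprod : ((n * m : ℤ) : ℝ)
        = 4 * ⟪α, α'⟫_ℝ ^ 2 / (⟪α, α⟫_ℝ * ⟪α', α'⟫_ℝ) := by
      push_cast
      rw [← hn, ← hm, hip']
      field_simp
      ring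
    -- strict Cauchy-Schwarz
    have hapos : (0:ℝ) < ⟪α, α⟫_ℝ := lt_of_le_of_ne real_inner_self_nonneg (Ne.symm ha)
    have ha'pos : (0:ℝ) < ⟪α', α'⟫_ℝ := lt_of_le_of_ne real_inner_self_nonneg (Ne.symm ha')
    have hnα : (0:ℝ) < ‖α‖ := norm_pos_iff.mpr (hR.ne_zero α hαR)
    have hnα' : (0:ℝ) < ‖α'‖ := norm_pos_iff.mpr (hR.ne_zero α' hα'R)
    have hcs : |⟪α, α'⟫_ℝ| < ‖α‖ * ‖α'‖ := by
      rcases lt_or_eq_of_le (abs_real_inner_le_norm α α') with h | h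
      · exact h
      · exfalso
        have hone : |⟪α, α'⟫_ℝ / (‖α‖ * ‖α'‖)| = 1 := by
          rw [abs_div, h, abs_of_pos (by positivity)]
          field_simp
        obtain ⟨-, r, -, hr⟩ := (abs_real_inner_div_norm_mul_norm_eq_one_iff α α').mp hone
        exact hpar ⟨r, hr⟩
    have hsq : ⟪α, α'⟫_ℝ ^ 2 < ⟪α, α⟫_ℝ * ⟪α', α'⟫_ℝ := by
      have h1 : ⟪α, α'⟫_ℝ ^ 2 < (‖α‖ * ‖α'‖) ^ 2 := by
        rw [← sq_abs]
        exact pow_lt_pow_left₀ hcs (abs_nonneg _) (by norm_num)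
      calc ⟪α, α'⟫_ℝ ^ 2 < (‖α‖ * ‖α'‖) ^ 2 := h1
        _ = ⟪α, α⟫_ℝ * ⟪α', α'⟫_ℝ := by
            rw [real_inner_self_eq_norm_mul_norm, real_inner_self_eq_norm_mul_norm]; ring
    have hipsq : (0:ℝ) < ⟪α, α'⟫_ℝ ^ 2 :=
      lt_of_le_of_ne (sq_nonneg _) (Ne.symm (pow_ne_zero 2 hip))
    have hnm_pos : (0:ℤ) < n * m := by
      have : (0:ℝ) < ((n * m : ℤ) : ℝ) := by
        rw [hprod]
        exact div_pos (by linarith) (by positivity)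
      exact_mod_cast this
    have hnm_lt : n * m < 4 := by
      have : ((n * m : ℤ) : ℝ) < 4 := by
        rw [hprod, div_lt_iff₀ (by positivity)]
        nlinarith
      exact_mod_cast this
    have hcase : n = 1 ∨ n = -1 ∨ m = 1 ∨ m = -1 := by
      by_contra hc
      push_neg at hc
      obtain ⟨h1, h2, h3, h4⟩ := hc
      have hn0 : n ≠ 0 := by rintro rfl; simp at hnm_pos
      have hm0 : m ≠ 0 := by rintro rfl; simp at hnm_pos
      rcases (by omega : 2 ≤ n ∨ n ≤ -2) with h | h <;>
        rcases (by omega : 2 ≤ m ∨ m ≤ -2) with h' | h' <;> nlinarith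
    have hnegR : ∀ v ∈ R, -v ∈ R := fun v hv => neg_mem_root hR hv
    rcases hcase with h | h | h | h
    · -- n = 1 : α' - α ∈ R, so α - α' ∈ R
      have : sRefl α α' ∈ R := hR.refl_mem α hαR α' hα'R
      rw [sRefl, hn, h] at this
      push_cast at this
      rw [one_smul] at this
      have : α - α' ∈ R := by
        have := hnegR _ this
        rwa [neg_sub] at this
      exact hso.2 this
    · -- n = -1 : α' + α ∈ R
      have : sRefl α α' ∈ R := hR.refl_mem α hαR α' hα'R
      rw [sRefl, hn, h] at this
      push_cast at this
      rw [neg_one_smul, sub_neg_eq_add, add_comm] at this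
      exact hso.1 this
    · -- m = 1 : α - α' ∈ R
      have : sRefl α' α ∈ R := hR.refl_mem α' hα'R α hαR
      rw [sRefl, hm, h] at this
      push_cast at this
      rw [one_smul] at this
      exact hso.2 this
    · -- m = -1 : α + α' ∈ R
      have : sRefl α' α ∈ R := hR.refl_mem α' hα'R α hαR
      rw [sRefl, hm, h] at this
      push_cast at this
      rw [neg_one_smul, sub_neg_eq_add] at this
      exact hso.1 this

/-- Lemma B: two positive single reflections give a positive double reflection. -/
lemma lemB (hR : IsRootSystem R) (hP : IsPositiveSystem R P)
    (hA : IsSOS R ↑A) (hsharp : PropSharp P ↑A) {α α' β : V}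
    (hα : α ∈ A) (hα' : α' ∈ A) (hne : α ≠ α') (hβ : β ∈ P)
    (h1 : sRefl α β ∈ P) (h2 : sRefl α' β ∈ P) : sRefl α (sRefl α' β) ∈ P := by
  have hβR : β ∈ R := hP.subset hβ
  have hαR : α ∈ R := hA.1 (by exact_mod_cast hα)
  have hα'R : α' ∈ R := hA.1 (by exact_mod_cast hα')
  have ha : ⟪α, α⟫_ℝ ≠ 0 := root_inner_self_ne hR hαR
  have ha' : ⟪α', α'⟫_ℝ ≠ 0 := root_inner_self_ne hR hα'R
  have hw : sRefl α (sRefl α' β) ∈ R :=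
    hR.refl_mem α hαR _ (hR.refl_mem α' hα'R β hβR)
  rcases hP.mem_or_neg_mem _ hw with h | h
  · exact h
  · exfalso
    have horth : ⟪α, α'⟫_ℝ = 0 := sos_orth hR hP hA hsharp hα hα' hne
    have hδ1 : -(sRefl α (-(sRefl α (sRefl α' β)))) ∈ P := by
      rw [sRefl_neg, sRefl_sRefl ha, neg_neg]
      exact h2
    have h3 := hsharp α (by exact_mod_cast hα) α' (by exact_mod_cast hα') hne _ h hδ1
    rw [sRefl_neg, sRefl_comm horth β, sRefl_sRefl ha'] at h3
    exact hP.not_both _ h1 h3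

/-- Lemma C: a negative single reflection stays negative after a second reflection. -/
lemma lemC (hP : IsPositiveSystem R P) (hsharp : PropSharp P ↑A)
    {α α' β : V} (hα : α ∈ A) (hα' : α' ∈ A) (hne : α ≠ α')
    (ha : ⟪α, α⟫_ℝ ≠ 0) (hβ : β ∈ P) (h1 : -(sRefl α β) ∈ P) :
    -(sRefl α' (sRefl α β)) ∈ P := by
  have hδ : -(sRefl α (-(sRefl α β))) ∈ P := by
    rw [sRefl_neg, sRefl_sRefl ha, neg_neg]
    exact hβ
  have h3 := hsharp α (by exact_mod_cast hα) α' (by exact_mod_cast hα') hne _ h1 hδ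
  rwa [sRefl_neg] at h3

/-- The main induction. -/
lemma mainInd [DecidableEq V] (hR : IsRootSystem R) (hP : IsPositiveSystem R P)
    (hA : IsSOS R ↑A) (hsharp : PropSharp P ↑A) (B : Finset V) :
    B ⊆ A → ∀ β ∈ P, (∀ α ∈ B, sRefl α β ∈ P) →
      SRefl B β ∈ P ∧
      ∀ α₀ ∈ A, α₀ ∉ B →
        (sRefl α₀ β ∈ P → sRefl α₀ (SRefl B β) ∈ P) ∧
        (-(sRefl α₀ β) ∈ P → -(sRefl α₀ (SRefl B β)) ∈ P) := by
  induction B using Finset.induction_on with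
  | empty =>
    intro _ β hβ _
    rw [SRefl_empty]
    exact ⟨hβ, fun α₀ _ _ => ⟨fun h => h, fun h => h⟩⟩
  | @insert a s hx ih =>
    intro hB β hβ hall
    have haA : a ∈ A := hB (Finset.mem_insert_self a s)
    have hsA : s ⊆ A := fun x hxs => hB (Finset.mem_insert_of_mem hxs)
    have haR : a ∈ R := hA.1 (by exact_mod_cast haA)
    have haa : ⟪a, a⟫_ℝ ≠ 0 := root_inner_self_ne hR haR
    have horthAll : ∀ α' ∈ s, ⟪a, α'⟫_ℝ = 0 := by
      intro α' h'
      exact sos_orth hR hP hA hsharp haA (hsA h') (fun he => hx (he ▸ h'))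
    have hSins : SRefl (insert a s) β = SRefl s (sRefl a β) :=
      SRefl_insert hx horthAll β
    have hγ : sRefl a β ∈ P := hall a (Finset.mem_insert_self a s)
    have hallγ : ∀ α' ∈ s, sRefl α' (sRefl a β) ∈ P := by
      intro α' h'
      exact lemB hR hP hA hsharp (hsA h') haA (fun he => hx (he ▸ h')) hβ
        (hall α' (Finset.mem_insert_of_mem h')) hγ
    obtain ⟨hmem, hrest⟩ := ih hsA (sRefl a β) hγ hallγ
    refine ⟨by rw [hSins]; exact hmem, ?_⟩
    intro α₀ hα₀A hα₀ni
    have hα₀a : α₀ ≠ a := fun h => hα₀ni (h ▸ Finset.mem_insert_self a s)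
    have hα₀s : α₀ ∉ s := fun h => hα₀ni (Finset.mem_insert_of_mem h)
    obtain ⟨ihp, ihn⟩ := hrest α₀ hα₀A hα₀s
    constructor
    · intro hpos
      have h4 : sRefl α₀ (sRefl a β) ∈ P :=
        lemB hR hP hA hsharp hα₀A haA hα₀a hβ hpos hγ
      rw [hSins]
      exact ihp h4
    · intro hneg
      have hα₀R : α₀ ∈ R := hA.1 (by exact_mod_cast hα₀A)
      have h4 : -(sRefl α₀ (sRefl a β)) ∈ P := by
        have h5 := lemC hP hsharp hα₀A haA hα₀a (root_inner_self_ne hR hα₀R) hβ hneg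
        rwa [sRefl_comm (sos_orth hR hP hA hsharp haA hα₀A hα₀a.symm) β] at h5
      rw [hSins]
      exact ihn h4

end RS

/-- Property `#` implies property `##`: for disjoint subsets `A₁, A₂ ⊆ A` and `β > 0`
with `S_{A₁}(β) < 0`, one has `S_{A₂}(β) > 0` and `S_{A₁}S_{A₂}(β) < 0`. -/
theorem statement5 (R P : Set V) (A : Finset V) (hR : IsRootSystem R)
    (hP : IsPositiveSystem R P) (hA : IsSOS R ↑A) (hsharp : PropSharp P ↑A) :
    ∀ A₁ ⊆ A, ∀ A₂ ⊆ A, Disjoint A₁ A₂ → ∀ β ∈ P, -(SRefl A₁ β) ∈ P →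
      SRefl A₂ β ∈ P ∧ -(SRefl A₁ (SRefl A₂ β)) ∈ P := by
  classical
  intro A₁ hA₁ A₂ hA₂ hdisj β hβ hneg
  -- Step 1: some α₀ ∈ A₁ has sRefl α₀ β negative
  have hex : ∃ α₀ ∈ A₁, -(sRefl α₀ β) ∈ P := by
    by_contra hc
    push_neg at hc
    have hall : ∀ α ∈ A₁, sRefl α β ∈ P := by
      intro α hα
      have hαR : α ∈ R := hA.1 (by exact_mod_cast hA₁ hα)
      rcases hP.mem_or_neg_mem _ (hR.refl_mem α hαR β (hP.subset hβ)) with h | h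
      · exact h
      · exact absurd h (hc α hα)
    exact hP.not_both _ (mainInd hR hP hA hsharp A₁ hA₁ β hβ hall).1 hneg
  obtain ⟨α₀, hα₀1, hα₀neg⟩ := hex
  have hα₀A : α₀ ∈ A := hA₁ hα₀1
  have hα₀2 : α₀ ∉ A₂ := Finset.disjoint_left.mp hdisj hα₀1
  -- Step 2: all reflections from A₂ are positive on β
  have hallA₂ : ∀ α ∈ A₂, sRefl α β ∈ P := by
    intro α hα
    have hne : α₀ ≠ α := fun h => hα₀2 (h ▸ hα)
    exact hsharp α₀ (by exact_mod_cast hα₀A) α (by exact_mod_cast hA₂ hα) hne β hβ hα₀neg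
  obtain ⟨hγP, hrest⟩ := mainInd hR hP hA hsharp A₂ hA₂ β hβ hallA₂
  refine ⟨hγP, ?_⟩
  have hγneg : -(sRefl α₀ (SRefl A₂ β)) ∈ P := (hrest α₀ hα₀A hα₀2).2 hα₀neg
  -- Step 3: Claim II on A₁ applied to γ = SRefl A₂ β
  have hallerase : ∀ α ∈ A₁.erase α₀, sRefl α (SRefl A₂ β) ∈ P := by
    intro α hα
    have hne : α₀ ≠ α := (Finset.ne_of_mem_erase hα).symm
    exact hsharp α₀ (by exact_mod_cast hα₀A) α
      (by exact_mod_cast hA₁ (Finset.mem_of_mem_erase hα)) hne _ hγP hγneg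
  have horth : ∀ α' ∈ A₁.erase α₀, ⟪α₀, α'⟫_ℝ = 0 := by
    intro α' h'
    exact sos_orth hR hP hA hsharp hα₀A (hA₁ (Finset.mem_of_mem_erase h'))
      (Finset.ne_of_mem_erase h').symm
  obtain ⟨-, h2'⟩ := mainInd hR hP hA hsharp (A₁.erase α₀)
    ((Finset.erase_subset α₀ A₁).trans hA₁) (SRefl A₂ β) hγP hallerase
  have hfin := (h2' α₀ hα₀A (Finset.notMem_erase α₀ A₁)).2 hγneg
  rw [show A₁ = insert α₀ (A₁.erase α₀) from (Finset.insert_erase hα₀1).symm,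
    SRefl_insert' (Finset.notMem_erase α₀ A₁) horth]
  exact hfin
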